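/- Let A be a Freudenthal (hyper-Archimedean) vector lattice: an Archimedean real vector lattice such that whenever 0 ≤ x ≤ u in A, there exist finitely many positive real numbers α₁,…,α_n and components e₁,…,e_n of u (i.e. e_i ∧ (u − e_i) = 0) with x = α₁e₁ + ⋯ + α_ne_n. Then every band preserving linear operator T : A → A is order bounded; that is, every Freudenthal vector lattice is a Wickstead space. -/

import Mathlib

open scoped BigOperators

section WicksteadAux

variable {A : Type*} [AddCommGroup A] [Lattice A] [AddLeftMono A] [AddRightMono A]

/-- Subadditivity of `c ⊓ ·` on nonnegative elements. -/
lemma aux_inf_add_le (a b c : A) (ha : 0 ≤ a) (hb : 0 ≤ b) (hc : 0 ≤ c) :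
    c ⊓ (a + b) ≤ c ⊓ a + c ⊓ b := by
  set d := c ⊓ (a + b) with hd
  have hdc : d ≤ c := inf_le_left
  have hdab : d ≤ a + b := inf_le_right
  have h1 : d - d ⊓ a = 0 ⊔ (d - a) := by rw [sub_inf, sub_self]
  have h2 : d = d ⊓ a + (0 ⊔ (d - a)) := by rw [← h1]; abel
  have h3 : d ⊓ a ≤ c ⊓ a := inf_le_inf_right a hdc
  have h4 : 0 ⊔ (d - a) ≤ c ⊓ b := by
    refine sup_le (le_inf hc hb) (le_inf ?_ ?_)
    · exact le_trans (sub_le_self d ha) hdc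
    · exact sub_le_iff_le_add'.2 hdab
  calc d = d ⊓ a + (0 ⊔ (d - a)) := h2
    _ ≤ c ⊓ a + c ⊓ b := add_le_add h3 h4

/-- Additivity of `a ⊓ ·` over disjoint nonnegative elements. -/
lemma aux_inf_add_eq (a b c : A) (ha : 0 ≤ a) (hb : 0 ≤ b) (hc : 0 ≤ c) (hbc : b ⊓ c = 0) :
    a ⊓ (b + c) = a ⊓ b + a ⊓ c := by
  refine le_antisymm (aux_inf_add_le b c a hb hc ha) ?_
  have h0 : (a ⊓ b) ⊓ (a ⊓ c) = 0 := by
    refine le_antisymm ?_ (le_inf (le_inf ha hb) (le_inf ha hc))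
    calc (a ⊓ b) ⊓ (a ⊓ c) ≤ b ⊓ c := inf_le_inf inf_le_right inf_le_right
      _ = 0 := hbc
  have h1 : a ⊓ b + a ⊓ c = (a ⊓ b) ⊔ (a ⊓ c) := by
    have := inf_add_sup (a ⊓ b) (a ⊓ c)
    rw [h0, zero_add] at this
    exact this.symm
  rw [h1]
  refine sup_le (le_inf inf_le_left ?_) (le_inf inf_le_left ?_)
  · exact le_trans inf_le_right (le_add_of_nonneg_right hc)
  · exact le_trans inf_le_right (le_add_of_nonneg_left hb)

lemma aux_add_inf_zero (p q b : A) (hp : 0 ≤ p) (hq : 0 ≤ q) (hb : 0 ≤ b)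
    (h1 : p ⊓ b = 0) (h2 : q ⊓ b = 0) : (p + q) ⊓ b = 0 := by
  refine le_antisymm ?_ (le_inf (add_nonneg hp hq) hb)
  calc (p + q) ⊓ b = b ⊓ (p + q) := inf_comm _ _
    _ ≤ b ⊓ p + b ⊓ q := aux_inf_add_le p q b hp hq hb
    _ = 0 := by rw [inf_comm b p, inf_comm b q, h1, h2, add_zero]

lemma aux_sum_nonneg {ι : Type*} (s : Finset ι) (t : ι → A)
    (h0 : ∀ i ∈ s, 0 ≤ t i) : 0 ≤ ∑ i ∈ s, t i := by
  classical
  revert h0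
  induction s using Finset.cons_induction_on with
  | empty => intro _; simp
  | cons _ _ ha ih =>
    intro h0
    rw [Finset.sum_cons]
    exact add_nonneg (h0 _ (Finset.mem_cons_self _ _))
      (ih fun i hi => h0 i (Finset.mem_cons_of_mem hi))

lemma aux_sum_inf_zero {ι : Type*} (s : Finset ι) (t : ι → A) (b : A) (hb : 0 ≤ b)
    (h0 : ∀ i ∈ s, 0 ≤ t i) (h : ∀ i ∈ s, t i ⊓ b = 0) : (∑ i ∈ s, t i) ⊓ b = 0 := by
  classical
  revert h0 h
  induction s using Finset.cons_induction_on with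
  | empty => intro _ _; simpa using inf_eq_left.2 hb
  | cons _ _ ha ih =>
    intro h0 h
    rw [Finset.sum_cons]
    have h0' : ∀ i ∈ _, 0 ≤ t i := fun i hi => h0 i (Finset.mem_cons_of_mem hi)
    have hs0 : (0:A) ≤ ∑ i ∈ _, t i := aux_sum_nonneg _ _ h0'
    exact aux_add_inf_zero _ _ _ (h0 _ (Finset.mem_cons_self _ _)) hs0 hb
      (h _ (Finset.mem_cons_self _ _))
      (ih h0' (fun i hi => h i (Finset.mem_cons_of_mem hi)))

section Smul
variable [Module ℝ A] (hsp : ∀ (r : ℝ) (a : A), 0 ≤ r → 0 ≤ a → 0 ≤ r • a)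
include hsp

lemma aux_smul_le {r : ℝ} (hr : 0 ≤ r) {a b : A} (h : a ≤ b) : r • a ≤ r • b := by
  have := hsp r (b - a) hr (sub_nonneg.2 h)
  rw [smul_sub] at this
  exact sub_nonneg.1 this

lemma aux_smul_scalar_le {r t : ℝ} (hrt : r ≤ t) {a : A} (ha : 0 ≤ a) : r • a ≤ t • a := by
  have := hsp (t - r) a (by linarith) ha
  rw [sub_smul] at this
  exact sub_nonneg.1 this

lemma aux_smul_inf {r : ℝ} (hr : 0 < r) (a b : A) : r • (a ⊓ b) = (r • a) ⊓ (r • b) := by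
  refine le_antisymm (le_inf (aux_smul_le hsp hr.le inf_le_left)
    (aux_smul_le hsp hr.le inf_le_right)) ?_
  have h1 : r⁻¹ • ((r • a) ⊓ (r • b)) ≤ a := by
    have := aux_smul_le hsp (inv_nonneg.2 hr.le)
      (inf_le_left : (r • a) ⊓ (r • b) ≤ r • a)
    rwa [inv_smul_smul₀ hr.ne'] at this
  have h2 : r⁻¹ • ((r • a) ⊓ (r • b)) ≤ b := by
    have := aux_smul_le hsp (inv_nonneg.2 hr.le)
      (inf_le_right : (r • a) ⊓ (r • b) ≤ r • b)
    rwa [inv_smul_smul₀ hr.ne'] at this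
  calc (r • a) ⊓ (r • b) = r • (r⁻¹ • ((r • a) ⊓ (r • b))) := (smul_inv_smul₀ hr.ne' _).symm
    _ ≤ r • (a ⊓ b) := aux_smul_le hsp hr.le (le_inf h1 h2)

lemma aux_smul_sup {r : ℝ} (hr : 0 < r) (a b : A) : r • (a ⊔ b) = (r • a) ⊔ (r • b) := by
  refine le_antisymm ?_ (sup_le (aux_smul_le hsp hr.le le_sup_left)
    (aux_smul_le hsp hr.le le_sup_right))
  have h1 : a ≤ r⁻¹ • ((r • a) ⊔ (r • b)) := by
    have := aux_smul_le hsp (inv_nonneg.2 hr.le)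
      (le_sup_left : r • a ≤ (r • a) ⊔ (r • b))
    rwa [inv_smul_smul₀ hr.ne'] at this
  have h2 : b ≤ r⁻¹ • ((r • a) ⊔ (r • b)) := by
    have := aux_smul_le hsp (inv_nonneg.2 hr.le)
      (le_sup_right : r • b ≤ (r • a) ⊔ (r • b))
    rwa [inv_smul_smul₀ hr.ne'] at this
  calc r • (a ⊔ b) ≤ r • (r⁻¹ • ((r • a) ⊔ (r • b))) :=
        aux_smul_le hsp hr.le (sup_le h1 h2)
    _ = (r • a) ⊔ (r • b) := smul_inv_smul₀ hr.ne' _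

lemma aux_smul_abs {r : ℝ} (hr : 0 ≤ r) (a : A) : |r • a| = r • |a| := by
  rcases hr.eq_or_lt with h | h
  · simp [← h]
  · show (r • a) ⊔ -(r • a) = r • (a ⊔ -a)
    rw [aux_smul_sup hsp h, smul_neg]

lemma aux_smul_inf_zero {r : ℝ} (hr : 0 ≤ r) {a b : A} (ha : 0 ≤ a) (hb : 0 ≤ b)
    (h : a ⊓ b = 0) : (r • a) ⊓ b = 0 := by
  have hn : ∀ n : ℕ, (n • a) ⊓ b = 0 := by
    intro n
    induction n with
    | zero => simpa using inf_eq_left.2 hb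
    | succ n ih =>
      refine le_antisymm ?_ (le_inf (nsmul_nonneg ha _) hb)
      calc ((n + 1) • a) ⊓ b = b ⊓ (n • a + a) := by rw [succ_nsmul, inf_comm]
        _ ≤ b ⊓ (n • a) + b ⊓ a := aux_inf_add_le _ _ _ (nsmul_nonneg ha n) ha hb
        _ = 0 := by rw [inf_comm b, ih, inf_comm b, h, add_zero]
  obtain ⟨n, hn'⟩ := exists_nat_ge r
  have hle : r • a ≤ n • a := by
    rw [← Nat.cast_smul_eq_nsmul ℝ n a]
    exact aux_smul_scalar_le hsp hn' ha
  refine le_antisymm ?_ (le_inf (hsp r a hr ha) hb)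
  calc (r • a) ⊓ b ≤ (n • a) ⊓ b := inf_le_inf_right b hle
    _ = 0 := hn n

end Smul

/-- If `|a| ⊓ |b| = 0` then `|a| ≤ |a + b|`. -/
lemma aux_abs_le_abs_add (a b : A) (h : |a| ⊓ |b| = 0) : |a| ≤ |a + b| := by
  have h1 : |a| ≤ |a + b| + |b| := by
    calc |a| = |a + b + -b| := by rw [add_neg_cancel_right]
      _ ≤ |a + b| + |(-b)| := abs_add_le _ _
      _ = |a + b| + |b| := by rw [abs_neg]
  calc |a| = |a| ⊓ (|a + b| + |b|) := (inf_eq_left.2 h1).symm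
    _ ≤ |a| ⊓ |a + b| + |a| ⊓ |b| := aux_inf_add_le _ _ _ (abs_nonneg _) (abs_nonneg _)
        (abs_nonneg _)
    _ = |a| ⊓ |a + b| := by rw [h, add_zero]
    _ ≤ |a + b| := inf_le_right

/-- For disjoint elements, `|a + b| = |a| + |b|`. -/
lemma aux_abs_add_eq (a b : A) (h : |a| ⊓ |b| = 0) : |a + b| = |a| + |b| := by
  refine le_antisymm (abs_add_le a b) ?_
  have hsum : |a| + |b| = |a| ⊔ |b| := by
    have := inf_add_sup |a| |b|
    rw [h, zero_add] at this
    exact this.symm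
  rw [hsum]
  refine sup_le (aux_abs_le_abs_add a b h) ?_
  have := aux_abs_le_abs_add b a (by rw [inf_comm]; exact h)
  rwa [add_comm] at this

end WicksteadAux

section WicksteadKey

variable {A : Type*} [AddCommGroup A] [Lattice A] [AddLeftMono A] [AddRightMono A]
  [Module ℝ A]

/-- Disjointness is preserved by a band preserving operator (applied twice). -/
lemma aux_T_disjoint (T : A →ₗ[ℝ] A)
    (hbp : ∀ x y : A, |x| ⊓ |y| = 0 → |T x| ⊓ |y| = 0)
    (a b : A) (h : |a| ⊓ |b| = 0) : |T a| ⊓ |T b| = 0 := by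
  have h1 : |T a| ⊓ |b| = 0 := hbp a b h
  have h2 : |b| ⊓ |T a| = 0 := by rwa [inf_comm] at h1
  have h3 : |T b| ⊓ |T a| = 0 := hbp b (T a) h2
  rwa [inf_comm] at h3

/-- Key induction: if `x` is a nonnegative combination of components of `u` and `x ≤ u`,
then `|T x| ≤ |T u|`. -/
lemma aux_key (hsp : ∀ (r : ℝ) (a : A), 0 ≤ r → 0 ≤ a → 0 ≤ r • a)
    (T : A →ₗ[ℝ] A)
    (hbp : ∀ x y : A, |x| ⊓ |y| = 0 → |T x| ⊓ |y| = 0) :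
    ∀ (k : ℕ) (u : A), 0 ≤ u → ∀ (α : Fin k → ℝ), (∀ i, 0 ≤ α i) →
      ∀ (e : Fin k → A), (∀ i, 0 ≤ e i ∧ e i ⊓ (u - e i) = 0) →
      (∑ i, α i • e i) ≤ u → |T (∑ i, α i • e i)| ≤ |T u| := by
  intro k
  induction k with
  | zero =>
    intro u hu α hα e he hle
    simp only [Finset.univ_eq_empty, Finset.sum_empty, map_zero, abs_zero]
    exact abs_nonneg _
  | succ k ih =>
    intro u hu α hα e he hle
    have he0 : ∀ i : Fin (k + 1), 0 ≤ e i := fun i => (he i).1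
    have hed : ∀ i : Fin (k + 1), e i ⊓ (u - e i) = 0 := fun i => (he i).2
    have heu0 : ∀ i : Fin (k + 1), 0 ≤ u - e i := fun i => (hed i) ▸ inf_le_right
    have heu : ∀ i : Fin (k + 1), e i ≤ u := fun i => sub_nonneg.1 (heu0 i)
    set f : A := e (Fin.last k) with hfdef
    have hf0 : 0 ≤ f := he0 (Fin.last k)
    have hfd : f ⊓ (u - f) = 0 := hed (Fin.last k)
    have huf0 : 0 ≤ u - f := heu0 (Fin.last k)
    have hfu : f ≤ u := heu (Fin.last k)
    -- split components along f
    set e' : Fin k → A := fun i => e i.castSucc ⊓ f with he'def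
    set e'' : Fin k → A := fun i => e i.castSucc ⊓ (u - f) with he''def
    have he'0 : ∀ i, 0 ≤ e' i := fun i => le_inf (he0 _) hf0
    have he''0 : ∀ i, 0 ≤ e'' i := fun i => le_inf (he0 _) huf0
    have he'f : ∀ i, e' i ≤ f := fun i => inf_le_right
    have he''f : ∀ i, e'' i ≤ u - f := fun i => inf_le_right
    have hsplit : ∀ i : Fin k, e i.castSucc = e' i + e'' i := by
      intro i
      have h1 : e i.castSucc ⊓ (f + (u - f)) = e i.castSucc ⊓ f + e i.castSucc ⊓ (u - f) :=
        aux_inf_add_eq _ _ _ (he0 _) hf0 huf0 hfd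
      have h2 : f + (u - f) = u := by abel
      rw [h2, inf_eq_left.2 (heu i.castSucc)] at h1
      exact h1
    -- e' i is a component of f
    have he'c : ∀ i : Fin k, e' i ⊓ (f - e' i) = 0 := by
      intro i
      have h1 : f ⊓ (e i.castSucc + (u - e i.castSucc)) =
          f ⊓ e i.castSucc + f ⊓ (u - e i.castSucc) :=
        aux_inf_add_eq _ _ _ hf0 (he0 _) (heu0 _) (hed _)
      have h2 : e i.castSucc + (u - e i.castSucc) = u := by abel
      rw [h2, inf_eq_left.2 hfu] at h1
      have h3 : f - e' i = f ⊓ (u - e i.castSucc) := by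
        have h4 : e' i = f ⊓ e i.castSucc := inf_comm _ _
        rw [h4, sub_eq_iff_eq_add']
        exact h1
      rw [h3]
      refine le_antisymm ?_ (le_inf (he'0 i) (le_inf hf0 (heu0 _)))
      calc e' i ⊓ (f ⊓ (u - e i.castSucc)) ≤ e i.castSucc ⊓ (u - e i.castSucc) :=
            inf_le_inf inf_le_left inf_le_right
        _ = 0 := hed _
    -- e'' i is a component of u - f
    have he''c : ∀ i : Fin k, e'' i ⊓ ((u - f) - e'' i) = 0 := by
      intro i
      have h1 : (u - f) ⊓ (e i.castSucc + (u - e i.castSucc)) =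
          (u - f) ⊓ e i.castSucc + (u - f) ⊓ (u - e i.castSucc) :=
        aux_inf_add_eq _ _ _ huf0 (he0 _) (heu0 _) (hed _)
      have h2 : e i.castSucc + (u - e i.castSucc) = u := by abel
      have h2' : (u - f) ⊓ u = u - f := inf_eq_left.2 (sub_le_self u hf0)
      rw [h2, h2'] at h1
      have h3 : (u - f) - e'' i = (u - f) ⊓ (u - e i.castSucc) := by
        have h4 : e'' i = (u - f) ⊓ e i.castSucc := inf_comm _ _
        rw [h4, sub_eq_iff_eq_add']
        exact h1
      rw [h3]
      refine le_antisymm ?_ (le_inf (he''0 i) (le_inf huf0 (heu0 _)))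
      calc e'' i ⊓ ((u - f) ⊓ (u - e i.castSucc)) ≤ e i.castSucc ⊓ (u - e i.castSucc) :=
            inf_le_inf inf_le_left inf_le_right
        _ = 0 := hed _
    -- decompose x
    set x : A := ∑ i, α i • e i with hxdef
    set y : A := ∑ i : Fin k, α i.castSucc • e' i with hydef
    set x₂ : A := ∑ i : Fin k, α i.castSucc • e'' i with hx₂def
    set x₁ : A := y + α (Fin.last k) • f with hx₁def
    have hy0 : 0 ≤ y := by
      rw [hydef]; exact aux_sum_nonneg _ _ fun i _ => hsp _ _ (hα _) (he'0 i)
    have hx₂0 : 0 ≤ x₂ := by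
      rw [hx₂def]; exact aux_sum_nonneg _ _ fun i _ => hsp _ _ (hα _) (he''0 i)
    have hx₁0 : 0 ≤ x₁ := add_nonneg hy0 (hsp _ _ (hα _) hf0)
    have hxsplit : x = x₁ + x₂ := by
      rw [hxdef, Fin.sum_univ_castSucc]
      have hterm : ∀ i : Fin k, α i.castSucc • e i.castSucc =
          α i.castSucc • e' i + α i.castSucc • e'' i := by
        intro i; rw [← smul_add, ← hsplit i]
      rw [Finset.sum_congr rfl fun i _ => hterm i, Finset.sum_add_distrib]
      rw [hx₁def, hydef, hx₂def, ← hfdef]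
      abel
    -- x₁ is disjoint from u - f , x₂ is disjoint from f
    have hx₁d : x₁ ⊓ (u - f) = 0 := by
      refine aux_add_inf_zero _ _ _ hy0 (hsp _ _ (hα _) hf0) huf0 ?_ ?_
      · refine aux_sum_inf_zero _ _ _ huf0 (fun i _ => hsp _ _ (hα _) (he'0 i)) ?_
        intro i _
        refine aux_smul_inf_zero hsp (hα _) (he'0 i) huf0 ?_
        refine le_antisymm ?_ (le_inf (he'0 i) huf0)
        calc e' i ⊓ (u - f) ≤ f ⊓ (u - f) := inf_le_inf_right _ (he'f i)
          _ = 0 := hfd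
      · exact aux_smul_inf_zero hsp (hα _) hf0 huf0 hfd
    have hx₂d : x₂ ⊓ f = 0 := by
      refine aux_sum_inf_zero _ _ _ hf0 (fun i _ => hsp _ _ (hα _) (he''0 i)) ?_
      intro i _
      refine aux_smul_inf_zero hsp (hα _) (he''0 i) hf0 ?_
      refine le_antisymm ?_ (le_inf (he''0 i) hf0)
      calc e'' i ⊓ f ≤ (u - f) ⊓ f := inf_le_inf_right _ (he''f i)
        _ = 0 := by rw [inf_comm]; exact hfd
    -- x₁ ≤ f and x₂ ≤ u - f
    have hle' : x₁ + x₂ ≤ u := by rw [← hxsplit]; exact hle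
    have hx₁u : x₁ ≤ u := le_trans (le_add_of_nonneg_right hx₂0) hle'
    have hx₂u : x₂ ≤ u := le_trans (le_add_of_nonneg_left hx₁0) hle'
    have hx₁f : x₁ ≤ f := by
      have h1 : x₁ ⊓ (f + (u - f)) = x₁ ⊓ f + x₁ ⊓ (u - f) :=
        aux_inf_add_eq _ _ _ hx₁0 hf0 huf0 hfd
      have h2 : f + (u - f) = u := by abel
      rw [h2, inf_eq_left.2 hx₁u, hx₁d, add_zero] at h1
      exact h1.trans_le inf_le_right
    have hx₂f : x₂ ≤ u - f := by
      have h1 : x₂ ⊓ (f + (u - f)) = x₂ ⊓ f + x₂ ⊓ (u - f) :=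
        aux_inf_add_eq _ _ _ hx₂0 hf0 huf0 hfd
      have h2 : f + (u - f) = u := by abel
      rw [h2, inf_eq_left.2 hx₂u, hx₂d, zero_add] at h1
      exact h1.trans_le inf_le_right
    -- capping the coefficient of f
    set γ : ℝ := min (α (Fin.last k)) 1 with hγdef
    have hγ0 : 0 ≤ γ := le_min (hα _) zero_le_one
    have hγ1 : γ ≤ 1 := min_le_right _ _
    have hflast : α (Fin.last k) • f ≤ f := by
      refine le_trans ?_ hx₁f
      rw [hx₁def]
      exact le_add_of_nonneg_left hy0
    have hcap : α (Fin.last k) • f = γ • f := by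
      rcases le_total (α (Fin.last k)) 1 with h | h
      · rw [hγdef, min_eq_left h]
      · have h0 : (α (Fin.last k) - 1) • f ≤ 0 := by
          rw [sub_smul, one_smul]
          exact sub_nonpos.2 hflast
        have h0' : 0 ≤ (α (Fin.last k) - 1) • f := hsp _ _ (by linarith) hf0
        have hz : (α (Fin.last k) - 1) • f = 0 := le_antisymm h0 h0'
        rw [sub_smul, one_smul, sub_eq_zero] at hz
        rw [hγdef, min_eq_right h, one_smul, hz]
    have hx₁eq : x₁ = y + γ • f := by rw [hx₁def, hcap]
    have hyle : y ≤ (1 - γ) • f := by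
      have h1 : y = x₁ - γ • f := by rw [hx₁eq]; abel
      rw [h1, sub_smul, one_smul]
      exact sub_le_sub_right hx₁f _
    -- |T x₁| ≤ |T f|
    have hTx₁ : |T x₁| ≤ |T f| := by
      rcases eq_or_lt_of_le hγ1 with hγeq | hγlt
      · have hy' : y = 0 := by
          refine le_antisymm ?_ hy0
          have : (1 - γ) • f = 0 := by rw [hγeq, sub_self, zero_smul]
          rw [← this]
          exact hyle
        have hx₁' : x₁ = f := by rw [hx₁eq, hy', zero_add, hγeq, one_smul]
        rw [hx₁']
      · have hr : (0:ℝ) < 1 - γ := by linarith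
        set r : ℝ := 1 - γ with hrdef
        -- apply IH to y inside r • f
        have hcomp : ∀ i : Fin k, 0 ≤ r • e' i ∧ (r • e' i) ⊓ (r • f - r • e' i) = 0 := by
          intro i
          refine ⟨hsp _ _ hr.le (he'0 i), ?_⟩
          rw [← smul_sub, ← aux_smul_inf hsp hr, he'c i, smul_zero]
        have hsum : ∑ i : Fin k, (α i.castSucc / r) • (r • e' i) = y := by
          rw [hydef]
          refine Finset.sum_congr rfl fun i _ => ?_
          rw [smul_smul, div_mul_cancel₀ _ hr.ne']
        have hIH := ih (r • f) (hsp _ _ hr.le hf0) (fun i => α i.castSucc / r)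
          (fun i => div_nonneg (hα _) hr.le) (fun i => r • e' i) hcomp
          (by rw [hsum]; exact hyle)
        rw [hsum] at hIH
        have hTy : |T y| ≤ r • |T f| := by
          calc |T y| ≤ |T (r • f)| := hIH
            _ = |r • T f| := by rw [map_smul]
            _ = r • |T f| := aux_smul_abs hsp hr.le _
        calc |T x₁| = |T y + γ • T f| := by rw [hx₁eq, map_add, map_smul]
          _ ≤ |T y| + |γ • T f| := abs_add_le _ _
          _ = |T y| + γ • |T f| := by rw [aux_smul_abs hsp hγ0]
          _ ≤ r • |T f| + γ • |T f| := add_le_add_left hTy _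
          _ = (r + γ) • |T f| := by rw [add_smul]
          _ = |T f| := by rw [hrdef, sub_add_cancel, one_smul]
    -- |T x₂| ≤ |T (u - f)|
    have hTx₂ : |T x₂| ≤ |T (u - f)| :=
      ih (u - f) huf0 (fun i => α i.castSucc) (fun i => hα _) e''
        (fun i => ⟨he''0 i, he''c i⟩) hx₂f
    -- combine
    have hfd' : |T f| ⊓ |T (u - f)| = 0 := by
      refine aux_T_disjoint T hbp f (u - f) ?_
      rw [abs_of_nonneg hf0, abs_of_nonneg huf0]
      exact hfd
    have hTu : |T u| = |T f| + |T (u - f)| := by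
      have h1 : T u = T f + T (u - f) := by
        rw [← map_add]
        congr 1
        abel
      rw [h1, aux_abs_add_eq _ _ hfd']
    calc |T x| = |T x₁ + T x₂| := by rw [hxsplit, map_add]
      _ ≤ |T x₁| + |T x₂| := abs_add_le _ _
      _ ≤ |T f| + |T (u - f)| := add_le_add hTx₁ hTx₂
      _ = |T u| := hTu.symm

end WicksteadKey

/-- Let `A` be a Freudenthal (hyper-Archimedean) vector lattice: an
Archimedean real vector lattice such that whenever `0 ≤ x ≤ u` in `A` there exist finitely
many positive reals `α₁,…,α_k` and components `e₁,…,e_k` of `u` (i.e. `eᵢ ⊓ (u − eᵢ) = 0`)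
with `x = Σᵢ αᵢ • eᵢ`. Then every band preserving linear operator `T : A → A` is order
bounded; that is, every Freudenthal vector lattice is a Wickstead space. -/
theorem freudenthal_band_preserving_order_bounded (A : Type*)
    [AddCommGroup A] [Lattice A] [Module ℝ A]
    (hadd : ∀ a b c : A, a ≤ b → a + c ≤ b + c)
    (hsmulpos : ∀ (r : ℝ) (a : A), 0 ≤ r → 0 ≤ a → 0 ≤ r • a)
    (harch : ∀ a b : A, 0 ≤ a → 0 ≤ b → (∀ n : ℕ, n • a ≤ b) → a = 0)
    (hfreud : ∀ x u : A, 0 ≤ x → x ≤ u →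
      ∃ (k : ℕ) (α : Fin k → ℝ) (e : Fin k → A),
        (∀ i, 0 < α i) ∧ (∀ i, 0 ≤ e i ∧ e i ⊓ (u - e i) = 0) ∧ x = ∑ i, α i • e i)
    (T : A →ₗ[ℝ] A)
    (hbp : ∀ x y : A, |x| ⊓ |y| = 0 → |T x| ⊓ |y| = 0) :
    ∀ s : Set A, (∃ a b : A, s ⊆ Set.Icc a b) → ∃ l u : A, T '' s ⊆ Set.Icc l u := by
  haveI : AddRightMono A := ⟨fun c a b h => hadd a b c h⟩
  haveI : AddLeftMono A := ⟨fun c a b h => by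
    rw [add_comm c a, add_comm c b]; exact hadd a b c h⟩
  intro s hs
  obtain ⟨a, b, hab⟩ := hs
  rcases Set.eq_empty_or_nonempty s with rfl | ⟨x0, hx0⟩
  · exact ⟨0, 0, by simp⟩
  have hab' : a ≤ b := le_trans (hab hx0).1 (hab hx0).2
  have hu0 : 0 ≤ b - a := sub_nonneg.2 hab'
  refine ⟨T a - |T (b - a)|, T a + |T (b - a)|, ?_⟩
  rintro _ ⟨x, hxs, rfl⟩
  have hx1 : a ≤ x := (hab hxs).1
  have hx2 : x ≤ b := (hab hxs).2
  have h0 : 0 ≤ x - a := sub_nonneg.2 hx1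
  have h1 : x - a ≤ b - a := sub_le_sub_right hx2 a
  obtain ⟨k, α, e, hαpos, he, hxe⟩ := hfreud (x - a) (b - a) h0 h1
  have hkey := aux_key hsmulpos T hbp k (b - a) hu0 α (fun i => (hαpos i).le) e he
    (by rw [← hxe]; exact h1)
  rw [← hxe] at hkey
  have hTx : T x = T a + T (x - a) := by
    rw [map_sub]; abel
  constructor
  · have h2 : -|T (b - a)| ≤ T (x - a) :=
      neg_le.mpr (le_trans (neg_le_abs (T (x - a))) hkey)
    calc T a - |T (b - a)| = T a + -|T (b - a)| := by abel
      _ ≤ T a + T (x - a) := add_le_add_right h2 _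
      _ = T x := hTx.symm
  · have h2 : T (x - a) ≤ |T (b - a)| := le_trans (le_abs_self _) hkey
    calc T x = T a + T (x - a) := hTx
      _ ≤ T a + |T (b - a)| := add_le_add_right h2 _
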